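/- Let X be an inductive invariant of a UWSTS W with state wqo (S, ≼). Then the downward closure (with respect to ideal inclusion) of the set of inclusion-maximal ideals contained in X is a finitely-represented inductive invariant of the ideal completion of W; in particular, X is the union of its inclusion-maximal ideals, and that set of maximal ideals is finite. -/

import Mathlib

/-- An ideal: a non-empty, downward closed, directed subset. -/
def IsIdeal {X : Type*} (r : X → X → Prop) (Z : Set X) : Prop :=
  Z.Nonempty ∧ (∀ ⦃x y⦄, x ∈ Z → r y x → y ∈ Z) ∧
    ∀ z ∈ Z, ∀ z' ∈ Z, ∃ z'' ∈ Z, r z z'' ∧ r z' z''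

/-- The downward closure of a set. -/
def downClosure {X : Type*} (r : X → X → Prop) (U : Set X) : Set X :=
  {x | ∃ u ∈ U, r x u}

/-- An inclusion-maximal ideal of a set `W`. -/
def MaxIdealOf {X : Type*} (r : X → X → Prop) (Z W : Set X) : Prop :=
  IsIdeal r Z ∧ Z ⊆ W ∧ ∀ Z' : Set X, IsIdeal r Z' → Z' ⊆ W → Z ⊆ Z' → Z' = Z

/-- The set of `a`-successors of `Y`. -/
def Succ {S A : Type*} (T : S → A → S → Prop) (a : A) (Y : Set S) : Set S :=
  {t | ∃ s ∈ Y, T s a t}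

section Aux
variable {S : Type*} {pre : S → S → Prop}

/-- downward closedness predicate -/
def DownC (pre : S → S → Prop) (D : Set S) : Prop :=
  ∀ ⦃x y⦄, x ∈ D → pre y x → y ∈ D

/-- finite subsets of an ideal have an upper bound in the ideal -/
lemma ideal_bound (htrans : Transitive pre) {Y : Set S} (hY : IsIdeal pre Y)
    {Tt : Set S} (hT : Tt.Finite) (hTY : Tt ⊆ Y) : ∃ u ∈ Y, ∀ t ∈ Tt, pre t u := by
  revert hTY
  induction Tt, hT using Set.Finite.induction_on with
  | empty =>
    intro _
    obtain ⟨u, hu⟩ := hY.1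
    exact ⟨u, hu, by simp⟩
  | @insert a s _ _ ih =>
    intro hTY
    obtain ⟨u, huY, hu⟩ := ih (fun x hx => hTY (Set.mem_insert_of_mem _ hx))
    obtain ⟨v, hvY, hav, huv⟩ := hY.2.2 a (hTY (Set.mem_insert _ _)) u huY
    refine ⟨v, hvY, ?_⟩
    rintro t (rfl | ht)
    · exact hav
    · exact htrans (hu t ht) huv

/-- every downward-closed set in a wqo is a finite union of ideals -/
lemma decomp (hrefl : Reflexive pre) (htrans : Transitive pre)
    (hwqo : ∀ f : ℕ → S, ∃ i j : ℕ, i < j ∧ pre (f i) (f j))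
    (X : Set S) (hX : DownC pre X) :
    ∃ 𝒥 : Set (Set S), 𝒥.Finite ∧ (∀ J ∈ 𝒥, IsIdeal pre J ∧ J ⊆ X) ∧ X = ⋃₀ 𝒥 := by
  set Good : Set S → Prop := fun D =>
    ∃ 𝒥 : Set (Set S), 𝒥.Finite ∧ (∀ J ∈ 𝒥, IsIdeal pre J ∧ J ⊆ D) ∧ D = ⋃₀ 𝒥 with hGood
  by_contra h0
  set Bad : Set S → Prop := fun D => DownC pre D ∧ ¬ Good D with hBad
  have step : ∀ D, Bad D → ∃ D', Bad D' ∧ D' ⊂ D := by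
    rintro D ⟨hD, hDg⟩
    have hne : D.Nonempty := by
      rcases Set.eq_empty_or_nonempty D with rfl | h
      · exact absurd ⟨∅, Set.finite_empty, by simp, by simp⟩ hDg
      · exact h
    have hndir : ¬ ∀ a ∈ D, ∀ b ∈ D, ∃ c ∈ D, pre a c ∧ pre b c := by
      intro hdir
      exact hDg ⟨{D}, Set.finite_singleton _, by
        rintro J rfl
        exact ⟨⟨hne, hD, hdir⟩, subset_rfl⟩, by simp⟩
    push_neg at hndir
    obtain ⟨a, haD, b, hbD, hab⟩ := hndir
    set D₁ : Set S := {x ∈ D | ¬ pre a x} with hD₁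
    set D₂ : Set S := {x ∈ D | ¬ pre b x} with hD₂
    have hdown₁ : DownC pre D₁ := by
      rintro x y ⟨hxD, hax⟩ hyx
      exact ⟨hD hxD hyx, fun h => hax (htrans h hyx)⟩
    have hdown₂ : DownC pre D₂ := by
      rintro x y ⟨hxD, hbx⟩ hyx
      exact ⟨hD hxD hyx, fun h => hbx (htrans h hyx)⟩
    have hcover : D = D₁ ∪ D₂ := by
      ext x
      constructor
      · intro hx
        by_cases h1 : pre a x
        · by_cases h2 : pre b x
          · exact absurd h2 (hab x hx h1)
          · exact Or.inr ⟨hx, h2⟩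
        · exact Or.inl ⟨hx, h1⟩
      · rintro (⟨h, _⟩ | ⟨h, _⟩) <;> exact h
    have hs₁ : D₁ ⊂ D :=
      Set.ssubset_iff_of_subset (fun x hx => hx.1) |>.mpr
        ⟨a, haD, fun h => h.2 (hrefl a)⟩
    have hs₂ : D₂ ⊂ D :=
      Set.ssubset_iff_of_subset (fun x hx => hx.1) |>.mpr
        ⟨b, hbD, fun h => h.2 (hrefl b)⟩
    by_cases hg1 : Good D₁
    · by_cases hg2 : Good D₂
      · obtain ⟨𝒥₁, hf1, hi1, hu1⟩ := hg1
        obtain ⟨𝒥₂, hf2, hi2, hu2⟩ := hg2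
        refine absurd ⟨𝒥₁ ∪ 𝒥₂, hf1.union hf2, ?_, ?_⟩ hDg
        · rintro J (hJ | hJ)
          · exact ⟨(hi1 J hJ).1, (hi1 J hJ).2.trans hs₁.1⟩
          · exact ⟨(hi2 J hJ).1, (hi2 J hJ).2.trans hs₂.1⟩
        · rw [Set.sUnion_union, ← hu1, ← hu2, hcover]
      · exact ⟨D₂, ⟨hdown₂, hg2⟩, hs₂⟩
    · exact ⟨D₁, ⟨hdown₁, hg1⟩, hs₁⟩
  choose Fn hFn using step
  let g : ℕ → {D : Set S // Bad D} := fun n =>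
    n.rec ⟨X, hX, h0⟩ (fun _ p => ⟨Fn p.1 p.2, (hFn p.1 p.2).1⟩)
  have hg : ∀ n, (g (n + 1)).1 ⊂ (g n).1 := fun n => (hFn (g n).1 (g n).2).2
  have hmono : ∀ i j, i ≤ j → (g j).1 ⊆ (g i).1 := by
    intro i j hij
    induction j with
    | zero => simp_all
    | succ k ih =>
      rcases Nat.lt_or_ge i (k + 1) with h | h
      · exact (hg k).1.trans (ih (Nat.lt_succ_iff.mp h))
      · have : i = k + 1 := le_antisymm (by omega) h
        subst this; exact subset_rfl
  choose x hx hx' using fun n => Set.exists_of_ssubset (hg n)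
  obtain ⟨i, j, hij, hpre⟩ := hwqo x
  exact hx' i ((g (i + 1)).2.1 (hmono (i + 1) j hij (hx j)) hpre)

/-- given a finite ideal decomposition of `X`, every ideal inside `X`
lies inside one of the decomposing ideals -/
lemma ideal_le_of_decomp (htrans : Transitive pre) {X : Set S} {𝒥 : Set (Set S)}
    (hfin : 𝒥.Finite) (hid : ∀ J ∈ 𝒥, IsIdeal pre J ∧ J ⊆ X) (hun : X = ⋃₀ 𝒥)
    {Y : Set S} (hY : IsIdeal pre Y) (hYX : Y ⊆ X) : ∃ J ∈ 𝒥, Y ⊆ J := by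
  by_contra hcon
  push_neg at hcon
  obtain ⟨y0, hy0⟩ := hY.1
  have key : ∀ J : Set S, ∃ s, s ∈ Y ∧ (J ∈ 𝒥 → s ∉ J) := by
    intro J
    by_cases hJ : J ∈ 𝒥
    · obtain ⟨s, hsY, hsJ⟩ := Set.not_subset.mp (hcon J hJ)
      exact ⟨s, hsY, fun _ => hsJ⟩
    · exact ⟨y0, hy0, fun h => absurd h hJ⟩
  choose y hyY hyJ using key
  obtain ⟨u, huY, hu⟩ := ideal_bound htrans hY (hfin.image y)
    (by rintro _ ⟨J, _, rfl⟩; exact hyY J)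
  obtain ⟨J, hJ, huJ⟩ := (hun ▸ hYX) huY
  exact hyJ J hJ ((hid J hJ).1.2.1 huJ (hu (y J) (Set.mem_image_of_mem y hJ)))

/-- every ideal inside a downward-closed set `X` extends to a maximal ideal of `X` -/
lemma exists_maxIdeal (htrans : Transitive pre) {X : Set S} {𝒥 : Set (Set S)}
    (hfin : 𝒥.Finite) (hid : ∀ J ∈ 𝒥, IsIdeal pre J ∧ J ⊆ X) (hun : X = ⋃₀ 𝒥)
    {Y : Set S} (hY : IsIdeal pre Y) (hYX : Y ⊆ X) :
    ∃ J, MaxIdealOf pre J X ∧ Y ⊆ J := by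
  obtain ⟨J0, hJ0, hYJ0⟩ := ideal_le_of_decomp htrans hfin hid hun hY hYX
  obtain ⟨J, ⟨hJ𝒥, hYJ⟩, hmax⟩ :=
    Set.Finite.exists_maximalFor id {J ∈ 𝒥 | Y ⊆ J} (hfin.subset (Set.sep_subset _ _))
      ⟨J0, hJ0, hYJ0⟩
  refine ⟨J, ⟨(hid J hJ𝒥).1, (hid J hJ𝒥).2, ?_⟩, hYJ⟩
  intro Z hZ hZX hJZ
  obtain ⟨J1, hJ1, hZJ1⟩ := ideal_le_of_decomp htrans hfin hid hun hZ hZX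
  have hJJ1 : J = J1 := le_antisymm (hJZ.trans hZJ1) (hmax ⟨hJ1, hYJ.trans (hJZ.trans hZJ1)⟩ (hJZ.trans hZJ1))
  exact le_antisymm (hJJ1 ▸ hZJ1) hJZ
end Aux

/-- An inductive invariant `X` of a UWSTS induces a finitely-represented
inductive invariant of the ideal completion, namely the downward closure
(w.r.t. inclusion) of the finitely many inclusion-maximal ideals of `X`;
moreover `X` is the union of those maximal ideals. -/
theorem inducedInvariant_ideal_completion
    {S A : Type*} (T : S → A → S → Prop) (pre : S → S → Prop)
    (I F : Set S)
    (hrefl : Reflexive pre) (htrans : Transitive pre)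
    (hwqo : ∀ f : ℕ → S, ∃ i j : ℕ, i < j ∧ pre (f i) (f j))
    (hcompat : ∀ ⦃s s' r : S⦄ ⦃a : A⦄, pre s s' → T s a r →
      ∃ r', T s' a r' ∧ pre r r')
    (hFup : ∀ ⦃f f'⦄, f ∈ F → pre f f' → f' ∈ F)
    (X : Set S)
    (hXdown : ∀ ⦃x y⦄, x ∈ X → pre y x → y ∈ X)
    (hXI : I ⊆ X) (hXF : F ∩ X = ∅)
    (hXsucc : ∀ (a : A), Succ T a X ⊆ X) :
    -- the set of inclusion-maximal ideals of `X` is finite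
    {Y : Set S | MaxIdealOf pre Y X}.Finite ∧
    -- `X` is the union of its inclusion-maximal ideals
    X = ⋃₀ {Y : Set S | MaxIdealOf pre Y X} ∧
    -- its downward closure w.r.t. inclusion among ideals is an inductive
    -- invariant of the ideal completion:
    -- (initial) every initial ideal is in the invariant
    (∀ Y : Set S, MaxIdealOf pre Y (downClosure pre I) →
      IsIdeal pre Y ∧ ∃ Z, MaxIdealOf pre Z X ∧ Y ⊆ Z) ∧
    -- (final) no ideal in the invariant meets `F`
    (∀ Y : Set S, (IsIdeal pre Y ∧ ∃ Z, MaxIdealOf pre Z X ∧ Y ⊆ Z) →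
      Y ∩ F = ∅) ∧
    -- (successors) the invariant is closed under the transition relation of
    -- the ideal completion
    (∀ (a : A) (Y Z : Set S),
      (IsIdeal pre Y ∧ ∃ Z', MaxIdealOf pre Z' X ∧ Y ⊆ Z') →
      MaxIdealOf pre Z (downClosure pre (Succ T a Y)) →
      IsIdeal pre Z ∧ ∃ Z', MaxIdealOf pre Z' X ∧ Z ⊆ Z') := by
  obtain ⟨𝒥, hfin, hid, hun⟩ := decomp hrefl htrans hwqo X hXdown
  have hext : ∀ {Y : Set S}, IsIdeal pre Y → Y ⊆ X →
      ∃ J, MaxIdealOf pre J X ∧ Y ⊆ J :=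
    fun hY hYX => exists_maxIdeal htrans hfin hid hun hY hYX
  refine ⟨?_, ?_, ?_, ?_, ?_⟩
  · refine hfin.subset ?_
    rintro Y ⟨hYid, hYX, hYmax⟩
    obtain ⟨J, hJ, hYJ⟩ := ideal_le_of_decomp htrans hfin hid hun hYid hYX
    exact hYmax J (hid J hJ).1 (hid J hJ).2 hYJ ▸ hJ
  · ext x
    constructor
    · intro hx
      have hprin : IsIdeal pre {y | pre y x} :=
        ⟨⟨x, hrefl x⟩, fun u v hu hvu => htrans hvu hu,
          fun z hz z' hz' => ⟨x, hrefl x, hz, hz'⟩⟩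
      obtain ⟨J, hJ, hsub⟩ := hext hprin (fun y hy => hXdown hx hy)
      exact ⟨J, hJ, hsub (hrefl x)⟩
    · rintro ⟨J, hJ, hxJ⟩
      exact hJ.2.1 hxJ
  · intro Y hY
    refine ⟨hY.1, ?_⟩
    have hYX : Y ⊆ X := hY.2.1.trans ?_
    · obtain ⟨J, hJ, hsub⟩ := hext hY.1 hYX
      exact ⟨J, hJ, hsub⟩
    · rintro x ⟨u, huI, hxu⟩
      exact hXdown (hXI huI) hxu
  · rintro Y ⟨hYid, Z, hZ, hYZ⟩
    rw [Set.eq_empty_iff_forall_notMem]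
    rintro y ⟨hyY, hyF⟩
    exact Set.eq_empty_iff_forall_notMem.mp hXF y ⟨hyF, hZ.2.1 (hYZ hyY)⟩
  · rintro a Y Z ⟨hYid, Z', hZ', hYZ'⟩ hZ
    refine ⟨hZ.1, ?_⟩
    have hZX : Z ⊆ X := hZ.2.1.trans ?_
    · obtain ⟨J, hJ, hsub⟩ := hext hZ.1 hZX
      exact ⟨J, hJ, hsub⟩
    · rintro x ⟨u, ⟨s, hsY, hT⟩, hxu⟩
      exact hXdown (hXsucc a ⟨s, hZ'.2.1 (hYZ' hsY), hT⟩) hxu
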